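/- For fixed real α, the function β ↦ I(α, β) = ∫₀¹ (c(x)^{α+1}·x^{−β} + c(1−x)^{α+1}·(1−x)^{−β} − 1)·(x(1−x))^{−3/2} dx is strictly increasing on (−∞, 2α + 3/2), tends to −∞ as β → −∞, and tends to +∞ as β → (2α + 3/2)⁻; consequently there exists a unique β(α) ∈ (−∞, 2α+3/2) with I(α, β(α)) = 0. -/

import Mathlib

/-- The limiting split function `c(x) = x²(3-2x)`. -/
def cfun (x : ℝ) : ℝ := x ^ 2 * (3 - 2 * x)

/-- The multifractal integral `I(α,β)`. -/
noncomputable def Ifun (α β : ℝ) : ℝ :=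
  ∫ x in Set.Ioo (0 : ℝ) 1,
    (cfun x ^ (α + 1) * x ^ (-β) + cfun (1 - x) ^ (α + 1) * (1 - x) ^ (-β) - 1) *
      (x * (1 - x)) ^ (-(3 / 2) : ℝ)

namespace IfunAux

open Set MeasureTheory Filter Real Topology

noncomputable def Fa (α β x : ℝ) : ℝ := cfun x ^ (α + 1) * x ^ (-β)

noncomputable def FF (α β x : ℝ) : ℝ :=
  (Fa α β x + Fa α β (1 - x) - 1) * (x * (1 - x)) ^ (-(3 / 2) : ℝ)

lemma Ifun_eq (α β : ℝ) : Ifun α β = ∫ x in Ioo (0:ℝ) 1, FF α β x := rfl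

lemma cfun_pos {x : ℝ} (h1 : 0 < x) (h2 : x < 3/2) : 0 < cfun x := by
  have : 0 < 3 - 2*x := by linarith
  have := pow_pos h1 2
  unfold cfun; positivity

lemma Fa_pos (α β : ℝ) {x : ℝ} (h1 : 0 < x) (h2 : x < 3/2) : 0 < Fa α β x :=
  mul_pos (rpow_pos_of_pos (cfun_pos h1 h2) _) (rpow_pos_of_pos h1 _)

lemma cfun_one : cfun 1 = 1 := by norm_num [cfun]

lemma Fa_one (α β : ℝ) : Fa α β 1 = 1 := by simp [Fa, cfun_one]

lemma Fa_lt (α : ℝ) {β₁ β₂ x : ℝ} (hx0 : 0 < x) (hx1 : x < 1) (h : β₁ < β₂) :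
    Fa α β₁ x < Fa α β₂ x := by
  unfold Fa
  exact mul_lt_mul_of_pos_left
    (Real.rpow_lt_rpow_of_exponent_gt hx0 hx1 (by linarith))
    (rpow_pos_of_pos (cfun_pos hx0 (by linarith)) _)

lemma Fa_le (α : ℝ) {β₁ β₂ x : ℝ} (hx0 : 0 < x) (hx1 : x ≤ 1) (h : β₁ ≤ β₂) :
    Fa α β₁ x ≤ Fa α β₂ x := by
  unfold Fa
  apply mul_le_mul_of_nonneg_left
    (Real.rpow_le_rpow_of_exponent_ge hx0 hx1 (by linarith))
    (rpow_pos_of_pos (cfun_pos hx0 (by linarith)) _).le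

lemma FF_lt (α : ℝ) {β₁ β₂ : ℝ} (h : β₁ < β₂) {x : ℝ} (hx : x ∈ Ioo (0:ℝ) 1) :
    FF α β₁ x < FF α β₂ x := by
  obtain ⟨hx0, hx1⟩ := hx
  have hw : (0:ℝ) < (x * (1-x)) ^ (-(3/2) : ℝ) :=
    rpow_pos_of_pos (mul_pos hx0 (by linarith)) _
  have h1 := Fa_lt α hx0 hx1 h
  have h2 := Fa_lt α (x := 1-x) (by linarith) (by linarith) h
  unfold FF
  exact mul_lt_mul_of_pos_right (by linarith) hw

lemma FF_le (α : ℝ) {β₁ β₂ : ℝ} (h : β₁ ≤ β₂) {x : ℝ} (hx : x ∈ Ioo (0:ℝ) 1) :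
    FF α β₁ x ≤ FF α β₂ x := by
  obtain ⟨hx0, hx1⟩ := hx
  have hw : (0:ℝ) ≤ (x * (1-x)) ^ (-(3/2) : ℝ) :=
    (rpow_pos_of_pos (mul_pos hx0 (by linarith)) _).le
  have h1 := Fa_le α hx0 hx1.le h
  have h2 := Fa_le α (x := 1-x) (by linarith) (by linarith) h
  unfold FF
  exact mul_le_mul_of_nonneg_right (by linarith) hw

lemma FF_symm (α β x : ℝ) : FF α β (1 - x) = FF α β x := by
  unfold FF
  rw [sub_sub_cancel, mul_comm (1-x) x]
  ring

lemma contOn_FF (α β : ℝ) : ContinuousOn (FF α β) (Ioo (0:ℝ) 1) := by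
  have hc : Continuous cfun := by unfold cfun; fun_prop
  have h1 : ContinuousOn (fun x : ℝ => Fa α β x) (Ioo (0:ℝ) 1) := by
    apply ContinuousOn.mul
    · exact ContinuousOn.rpow_const hc.continuousOn fun x hx =>
        Or.inl (cfun_pos hx.1 (by linarith [hx.2])).ne'
    · exact ContinuousOn.rpow_const continuousOn_id fun x hx => Or.inl hx.1.ne'
  have h2 : ContinuousOn (fun x : ℝ => Fa α β (1 - x)) (Ioo (0:ℝ) 1) := by
    apply ContinuousOn.mul
    · apply ContinuousOn.rpow_const ((hc.comp (continuous_const.sub continuous_id)).continuousOn)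
      intro x hx
      have h0 : (0:ℝ) < 1 - x := by linarith [hx.2]
      exact Or.inl (by simpa using (cfun_pos h0 (by linarith [hx.1])).ne')
    · apply ContinuousOn.rpow_const (continuous_const.sub continuous_id).continuousOn
      intro x hx
      have h0 : (0:ℝ) < 1 - x := by linarith [hx.2]
      exact Or.inl (by simpa using h0.ne')
  apply ContinuousOn.mul ((h1.add h2).sub continuousOn_const)
  · exact ContinuousOn.rpow_const (by fun_prop) fun x hx =>
      Or.inl (mul_pos hx.1 (by linarith [hx.2])).ne'

lemma meas_FF (α β : ℝ) : AEStronglyMeasurable (FF α β) (volume.restrict (Ioo (0:ℝ) 1)) :=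
  (contOn_FF α β).aestronglyMeasurable measurableSet_Ioo


/-- Lipschitz bound near `y = 1`. -/
lemma lip (α β : ℝ) : ∃ C : ℝ, 0 ≤ C ∧ ∀ y ∈ Icc (1/2:ℝ) 1, |Fa α β y - 1| ≤ C * (1 - y) := by
  set D : ℝ → ℝ := fun y =>
    ((6*y - 6*y^2) * (α+1) * cfun y ^ (α+1-1)) * y ^ (-β)
      + cfun y ^ (α+1) * ((-β) * y ^ (-β-1)) with hD
  have hderiv : ∀ y ∈ Icc (1/2:ℝ) 1, HasDerivAt (Fa α β) (D y) y := by
    intro y hy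
    have hy0 : 0 < y := lt_of_lt_of_le (by norm_num) hy.1
    have hcy : 0 < cfun y := cfun_pos hy0 (by linarith [hy.2])
    have h1 : HasDerivAt cfun (6*y - 6*y^2) y := by
      have h := (hasDerivAt_pow 2 y).mul
        ((hasDerivAt_const y (3:ℝ)).sub ((hasDerivAt_id y).const_mul 2))
      exact h.congr_deriv (by simp only [Pi.sub_apply, id_eq]; push_cast; ring)
    have h2 : HasDerivAt (fun y => cfun y ^ (α+1))
        ((6*y - 6*y^2) * (α+1) * cfun y ^ (α+1-1)) y := h1.rpow_const (Or.inl hcy.ne')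
    have h3 : HasDerivAt (fun y : ℝ => y ^ (-β)) ((-β) * y ^ (-β-1)) y :=
      Real.hasDerivAt_rpow_const (Or.inl hy0.ne')
    exact h2.mul h3
  have hDcont : ContinuousOn D (Icc (1/2:ℝ) 1) := by
    have hc : Continuous cfun := by unfold cfun; fun_prop
    have hne : ∀ y ∈ Icc (1/2:ℝ) 1, cfun y ≠ 0 := fun y hy =>
      (cfun_pos (lt_of_lt_of_le (by norm_num) hy.1) (by linarith [hy.2])).ne'
    have hyne : ∀ y ∈ Icc (1/2:ℝ) 1, y ≠ (0:ℝ) := fun y hy =>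
      (lt_of_lt_of_le (by norm_num) hy.1).ne'
    apply ContinuousOn.add
    · exact (((by fun_prop : ContinuousOn (fun y : ℝ => 6*y - 6*y^2) _).mul
        continuousOn_const).mul
          (hc.continuousOn.rpow_const fun y hy => Or.inl (hne y hy))).mul
          (continuousOn_id.rpow_const fun y hy => Or.inl (hyne y hy))
    · exact (hc.continuousOn.rpow_const fun y hy => Or.inl (hne y hy)).mul
        (continuousOn_const.mul (continuousOn_id.rpow_const fun y hy => Or.inl (hyne y hy)))
  obtain ⟨C, hC⟩ := (isCompact_Icc (a := (1/2:ℝ)) (b := 1)).exists_bound_of_continuousOn hDcont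
  refine ⟨max C 0, le_max_right _ _, fun y hy => ?_⟩
  have key := Convex.norm_image_sub_le_of_norm_hasDerivWithin_le
    (f := Fa α β) (f' := D) (C := max C 0) (s := Icc (1/2:ℝ) 1)
    (fun z hz => (hderiv z hz).hasDerivWithinAt)
    (fun z hz => le_trans (hC z hz) (le_max_left _ _))
    (convex_Icc _ _) (by norm_num : (1:ℝ) ∈ Icc (1/2:ℝ) 1) hy
  rw [Fa_one] at key
  simpa [abs_of_nonpos (by linarith [hy.2] : y - 1 ≤ 0)] using key

noncomputable def Kmax (α : ℝ) : ℝ := max ((2:ℝ) ^ (α+1)) ((3:ℝ) ^ (α+1))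
noncomputable def Kmin (α : ℝ) : ℝ := min ((2:ℝ) ^ (α+1)) ((3:ℝ) ^ (α+1))

lemma Kmin_pos (α : ℝ) : 0 < Kmin α :=
  lt_min (rpow_pos_of_pos (by norm_num) _) (rpow_pos_of_pos (by norm_num) _)

lemma Kmax_pos (α : ℝ) : 0 < Kmax α := lt_of_lt_of_le (Kmin_pos α) (min_le_max)

lemma factor_bounds (α : ℝ) {x : ℝ} (hx0 : 0 < x) (hx2 : x ≤ 1/2) :
    Kmin α ≤ (3-2*x) ^ (α+1) ∧ (3-2*x) ^ (α+1) ≤ Kmax α := by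
  have h2 : (2:ℝ) ≤ 3-2*x := by linarith
  have h3 : (3-2*x) ≤ 3 := by linarith
  rcases le_or_gt 0 (α+1) with hs | hs
  · exact ⟨le_trans (min_le_left _ _) (Real.rpow_le_rpow (by norm_num) h2 hs),
      le_trans (Real.rpow_le_rpow (by linarith) h3 hs) (le_max_right _ _)⟩
  · exact ⟨le_trans (min_le_right _ _) (Real.rpow_le_rpow_of_nonpos (by linarith) h3 hs.le),
      le_trans (Real.rpow_le_rpow_of_nonpos (by norm_num) h2 hs.le) (le_max_left _ _)⟩

lemma Fa_decomp (α β : ℝ) {x : ℝ} (hx0 : 0 < x) (hx2 : x ≤ 3/2) :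
    Fa α β x = (3-2*x) ^ (α+1) * x ^ (2*(α+1) - β) := by
  unfold Fa cfun
  have e1 : ((x^2 * (3-2*x)) : ℝ) ^ (α+1) = (x^2:ℝ) ^ (α+1) * (3-2*x) ^ (α+1) :=
    Real.mul_rpow (by positivity) (by linarith)
  have e2 : (x^2:ℝ) ^ (α+1) = x ^ (2*(α+1)) := by
    rw [← Real.rpow_natCast x 2, ← Real.rpow_mul hx0.le]
    norm_num
  have e3 : x ^ (2*(α+1) - β) = x ^ (2*(α+1)) * x ^ (-β) := by
    rw [show 2*(α+1) - β = 2*(α+1) + (-β) by ring, Real.rpow_add hx0]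
  rw [e1, e2, e3]; ring

lemma w_facts {x : ℝ} (hx0 : 0 < x) (hx2 : x ≤ 1/2) :
    1 ≤ (1-x) ^ (-(3/2):ℝ) ∧ (1-x) ^ (-(3/2):ℝ) ≤ 4 := by
  have h1 : (1/2:ℝ) ≤ 1-x := by linarith
  have h2 : (1-x) ≤ 1 := by linarith
  constructor
  · exact Real.one_le_rpow_of_pos_of_le_one_of_nonpos (by linarith) h2 (by norm_num)
  · have a : (1-x) ^ (-(3/2):ℝ) ≤ (1/2:ℝ) ^ (-(3/2):ℝ) :=
      Real.rpow_le_rpow_of_nonpos (by norm_num) h1 (by norm_num)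
    have b : ((1/2:ℝ)) ^ (-(3/2):ℝ) ≤ (1/2:ℝ) ^ ((-2:ℤ):ℝ) :=
      Real.rpow_le_rpow_of_exponent_ge (by norm_num) (by norm_num) (by push_cast; norm_num)
    have c : ((1/2:ℝ)) ^ ((-2:ℤ):ℝ) = 4 := by
      rw [Real.rpow_intCast]; norm_num
    linarith

lemma w_decomp {x : ℝ} (hx0 : 0 < x) (hx1 : x < 1) :
    (x*(1-x)) ^ (-(3/2):ℝ) = x ^ (-(3/2):ℝ) * (1-x) ^ (-(3/2):ℝ) :=
  Real.mul_rpow hx0.le (by linarith)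

lemma rpow_split (β : ℝ) {x : ℝ} (hx0 : 0 < x) :
    x ^ (2*(α:ℝ)+2 - β) * x ^ (-(3/2):ℝ) = x ^ (2*α+2 - β - (3/2)) ∧
      x * x ^ (-(3/2):ℝ) = x ^ (-(1/2):ℝ) := by
  constructor
  · rw [show 2*α+2 - β - (3/2) = (2*α+2 - β) + (-(3/2)) by ring, Real.rpow_add hx0]
  · rw [show (-(1/2):ℝ) = 1 + (-(3/2)) by norm_num, Real.rpow_add hx0, Real.rpow_one]

/-- Upper bound for `|FF|` on the left half. -/
lemma FF_upper (α β : ℝ) {C : ℝ} (hC0 : 0 ≤ C)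
    (hC : ∀ y ∈ Icc (1/2:ℝ) 1, |Fa α β y - 1| ≤ C * (1-y))
    {x : ℝ} (hx0 : 0 < x) (hx2 : x ≤ 1/2) :
    |FF α β x| ≤ 4 * Kmax α * x ^ (2*α+2 - β - (3/2)) + 4*C * x ^ (-(1/2):ℝ) := by
  have hx1 : x < 1 := by linarith
  set A := Fa α β x with hA'
  set Bt := Fa α β (1-x) with hBt'
  set R := x ^ (-(3/2):ℝ) with hR'
  set S := (1-x) ^ (-(3/2):ℝ) with hS'
  set T := x ^ (2*(α+1) - β) with hT'
  set P := x ^ (2*α+2 - β - (3/2)) with hP'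
  set Q := x ^ (-(1/2):ℝ) with hQ'
  have hRpos : 0 < R := rpow_pos_of_pos hx0 _
  have hTpos : 0 < T := rpow_pos_of_pos hx0 _
  have hApos : 0 < A := Fa_pos α β hx0 (by linarith)
  have hS := w_facts hx0 hx2
  have hSpos : (0:ℝ) < S := lt_of_lt_of_le zero_lt_one hS.1
  have hG := factor_bounds α hx0 hx2
  have hAe : A = (3-2*x) ^ (α+1) * T := Fa_decomp α β hx0 (by linarith)
  have hsplit := rpow_split (α := α) β hx0
  have hTR : T * R = P := by
    rw [hT', hR', hP', show 2*(α+1) - β = 2*α+2-β by ring]; exact hsplit.1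
  have hxR : x * R = Q := hsplit.2
  have hBt : |Bt - 1| ≤ C * x := by
    have := hC (1-x) ⟨by linarith, by linarith⟩
    simpa using this
  have hFF : FF α β x = (A + (Bt - 1)) * (R * S) := by
    rw [FF, ← w_decomp hx0 hx1]; ring
  have habs : |FF α β x| = |A + (Bt - 1)| * (R * S) := by
    rw [hFF, abs_mul, abs_of_nonneg (mul_nonneg hRpos.le hSpos.le)]
  have h1 : |A + (Bt - 1)| ≤ Kmax α * T + C * x := by
    calc |A + (Bt - 1)| ≤ |A| + |Bt - 1| := abs_add_le _ _
      _ ≤ Kmax α * T + C * x := by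
          rw [abs_of_pos hApos]
          refine add_le_add ?_ hBt
          rw [hAe]
          exact mul_le_mul_of_nonneg_right hG.2 hTpos.le
  have h2 : R * S ≤ R * 4 := mul_le_mul_of_nonneg_left hS.2 hRpos.le
  have h3 : |FF α β x| ≤ (Kmax α * T + C * x) * (R * 4) := by
    rw [habs]
    exact mul_le_mul h1 h2 (mul_nonneg hRpos.le hSpos.le)
      (add_nonneg (mul_nonneg (Kmax_pos α).le hTpos.le) (mul_nonneg hC0 hx0.le))
  calc |FF α β x| ≤ (Kmax α * T + C * x) * (R * 4) := h3
    _ = 4 * Kmax α * (T * R) + 4 * C * (x * R) := by ring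
    _ = 4 * Kmax α * P + 4 * C * Q := by rw [hTR, hxR]

/-- Lower bound for `FF` on the left half, uniform in `β ≥ β₁`. -/
lemma FF_lower (α β₁ β : ℝ) (hβ : β₁ ≤ β) {C : ℝ} (hC0 : 0 ≤ C)
    (hC : ∀ y ∈ Icc (1/2:ℝ) 1, |Fa α β₁ y - 1| ≤ C * (1-y))
    {x : ℝ} (hx0 : 0 < x) (hx2 : x ≤ 1/2) :
    Kmin α * x ^ (2*α+2 - β - (3/2)) - 4*C * x ^ (-(1/2):ℝ) ≤ FF α β x := by
  have hx1 : x < 1 := by linarith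
  set A := Fa α β x with hA'
  set Bt := Fa α β (1-x) with hBt'
  set R := x ^ (-(3/2):ℝ) with hR'
  set S := (1-x) ^ (-(3/2):ℝ) with hS'
  set T := x ^ (2*(α+1) - β) with hT'
  set P := x ^ (2*α+2 - β - (3/2)) with hP'
  set Q := x ^ (-(1/2):ℝ) with hQ'
  have hRpos : 0 < R := rpow_pos_of_pos hx0 _
  have hTpos : 0 < T := rpow_pos_of_pos hx0 _
  have hPpos : 0 < P := rpow_pos_of_pos hx0 _
  have hQpos : 0 < Q := rpow_pos_of_pos hx0 _
  have hS := w_facts hx0 hx2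
  have hSpos : (0:ℝ) < S := lt_of_lt_of_le zero_lt_one hS.1
  have hG := factor_bounds α hx0 hx2
  have hAe : A = (3-2*x) ^ (α+1) * T := Fa_decomp α β hx0 (by linarith)
  have hsplit := rpow_split (α := α) β hx0
  have hTR : T * R = P := by
    rw [hT', hR', hP', show 2*(α+1) - β = 2*α+2-β by ring]; exact hsplit.1
  have hxR : x * R = Q := hsplit.2
  have hBt : -(C * x) ≤ Bt - 1 := by
    have hmono : Fa α β₁ (1-x) ≤ Bt := Fa_le α (by linarith) (by linarith) hβ
    have := (abs_le.mp (by simpa using hC (1-x) ⟨by linarith, by linarith⟩)).1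
    linarith
  have hFF : FF α β x = A * (R * S) + (Bt - 1) * (R * S) := by
    rw [FF, ← w_decomp hx0 hx1]; ring
  have t1 : Kmin α * P ≤ A * (R * S) := by
    have : Kmin α * (T * R) * 1 ≤ (3-2*x) ^ (α+1) * (T * R) * S :=
      mul_le_mul (mul_le_mul_of_nonneg_right hG.1 (mul_nonneg hTpos.le hRpos.le)) hS.1
        zero_le_one
        (mul_nonneg (Real.rpow_nonneg (by linarith) _) (mul_nonneg hTpos.le hRpos.le))
    calc Kmin α * P = Kmin α * (T * R) * 1 := by rw [hTR]; ring
      _ ≤ (3-2*x) ^ (α+1) * (T * R) * S := this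
      _ = A * (R * S) := by rw [hAe]; ring
  have t2 : -(C * Q) * 4 ≤ (Bt - 1) * (R * S) := by
    have e2 : -(C*x) * (R*S) ≤ (Bt - 1) * (R*S) :=
      mul_le_mul_of_nonneg_right hBt (mul_nonneg hRpos.le hSpos.le)
    have e3 : -(C*x) * (R*S) = -(C * (x*R) * S) := by ring
    have e4 : C * Q * S ≤ C * Q * 4 :=
      mul_le_mul_of_nonneg_left hS.2 (mul_nonneg hC0 hQpos.le)
    have e5 : -(C*x) * (R*S) = -(C * Q * S) := by rw [e3, hxR]
    linarith
  linarith [hFF, t1, t2]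

lemma intOn_rpow {r : ℝ} (hr : -1 < r) {c : ℝ} (hc : 0 < c) :
    IntegrableOn (fun x : ℝ => x ^ r) (Ioo 0 c) := by
  have := intervalIntegral.intervalIntegrable_rpow' (a := 0) (b := c) hr
  rwa [intervalIntegrable_iff_integrableOn_Ioo_of_le hc.le] at this

lemma intOn_rpow' {r : ℝ} (hr : -1 < r) :
    IntegrableOn (fun x : ℝ => (1-x) ^ r) (Ioo (0:ℝ) 1) := by
  have h := (intervalIntegral.intervalIntegrable_rpow' (a := 0) (b := 1) hr).comp_sub_left 1
  simp only [sub_zero, sub_self] at h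
  have h2 := h.symm
  rwa [intervalIntegrable_iff_integrableOn_Ioo_of_le (by norm_num)] at h2

lemma integrableOn_FF (α β : ℝ) (hβ : β < 2*α + 3/2) :
    IntegrableOn (FF α β) (Ioo (0:ℝ) 1) := by
  obtain ⟨C, hC0, hC⟩ := lip α β
  set p := 2*α+2 - β - (3/2) with hp
  have hp1 : (-1:ℝ) < p := by rw [hp]; linarith
  have hGint : IntegrableOn (fun x : ℝ =>
      4 * Kmax α * x ^ p + 4*C * x ^ (-(1/2):ℝ)
        + (4 * Kmax α * (1-x) ^ p + 4*C * (1-x) ^ (-(1/2):ℝ))) (Ioo (0:ℝ) 1) := by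
    apply Integrable.add
    · exact ((intOn_rpow hp1 one_pos).const_mul _).add
        ((intOn_rpow (by norm_num) one_pos).const_mul _)
    · exact ((intOn_rpow' hp1).const_mul _).add
        ((intOn_rpow' (by norm_num)).const_mul _)
  apply Integrable.mono' hGint (meas_FF α β)
  filter_upwards [ae_restrict_mem measurableSet_Ioo] with x hx
  obtain ⟨hx0, hx1⟩ := hx
  have hpos1 : (0:ℝ) < x ^ p := rpow_pos_of_pos hx0 _
  have hpos2 : (0:ℝ) < x ^ (-(1/2):ℝ) := rpow_pos_of_pos hx0 _
  have hpos3 : (0:ℝ) < (1-x) ^ p := rpow_pos_of_pos (by linarith) _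
  have hpos4 : (0:ℝ) < (1-x) ^ (-(1/2):ℝ) := rpow_pos_of_pos (by linarith) _
  have hK := (Kmax_pos α).le
  rw [Real.norm_eq_abs]
  rcases le_or_gt x (1/2) with h | h
  · have := FF_upper α β hC0 hC hx0 h
    nlinarith [mul_nonneg (mul_nonneg (by norm_num : (0:ℝ) ≤ 4) hK) hpos3.le,
      mul_nonneg (mul_nonneg (by norm_num : (0:ℝ) ≤ 4) hC0) hpos4.le]
  · have h2 : (0:ℝ) < 1 - x := by linarith
    have := FF_upper α β hC0 hC h2 (by linarith)
    rw [FF_symm] at this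
    nlinarith [mul_nonneg (mul_nonneg (by norm_num : (0:ℝ) ≤ 4) hK) hpos1.le,
      mul_nonneg (mul_nonneg (by norm_num : (0:ℝ) ≤ 4) hC0) hpos2.le]

lemma Ifun_lt (α : ℝ) {β₁ β₂ : ℝ} (h1 : β₁ < β₂) (h2 : β₂ < 2*α + 3/2) :
    Ifun α β₁ < Ifun α β₂ := by
  have i1 := integrableOn_FF α β₁ (lt_trans h1 h2)
  have i2 := integrableOn_FF α β₂ h2
  rw [Ifun_eq, Ifun_eq, ← sub_pos, ← integral_sub i2 i1]
  have : (fun x => FF α β₂ x - FF α β₁ x) = FF α β₂ - FF α β₁ := rfl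
  rw [this, setIntegral_pos_iff_support_of_nonneg_ae ?_ (i2.sub i1)]
  · refine lt_of_lt_of_le ?_ (measure_mono (fun x hx =>
      ⟨(sub_pos.2 (FF_lt α h1 hx)).ne', hx⟩))
    rw [Real.volume_Ioo]
    norm_num
  · filter_upwards [ae_restrict_mem measurableSet_Ioo] with x hx
    exact sub_nonneg.2 (FF_le α h1.le hx)

lemma cont_rpow_exp {c : ℝ} (hc : 0 < c) : Continuous (fun β : ℝ => c ^ (-β)) := by
  have : (fun β : ℝ => c ^ (-β)) = fun β => Real.exp (Real.log c * (-β)) :=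
    funext fun β => Real.rpow_def_of_pos hc _
  rw [this]; fun_prop

lemma Ifun_contAt (α : ℝ) {β₀ : ℝ} (h : β₀ < 2*α + 3/2) : ContinuousAt (Ifun α) β₀ := by
  set β₂ := (β₀ + (2*α + 3/2))/2 with hβ₂
  have hb1 : β₀ < β₂ := by rw [hβ₂]; linarith
  have hb2 : β₂ < 2*α + 3/2 := by rw [hβ₂]; linarith
  have key : Tendsto (fun β => ∫ x in Ioo (0:ℝ) 1, FF α β x) (𝓝 β₀)
      (𝓝 (∫ x in Ioo (0:ℝ) 1, FF α β₀ x)) := by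
    apply MeasureTheory.tendsto_integral_filter_of_dominated_convergence
      (bound := fun x => |FF α (β₀-1) x| + |FF α β₂ x|)
    · exact Eventually.of_forall fun β => meas_FF α β
    · have hev : Ioo (β₀-1) β₂ ∈ 𝓝 β₀ := Ioo_mem_nhds (by linarith) hb1
      filter_upwards [hev] with β hβ
      filter_upwards [ae_restrict_mem measurableSet_Ioo] with x hx
      have l1 : FF α (β₀-1) x ≤ FF α β x := FF_le α hβ.1.le hx
      have l2 : FF α β x ≤ FF α β₂ x := FF_le α hβ.2.le hx
      rw [Real.norm_eq_abs, abs_le]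
      constructor
      · linarith [neg_abs_le (FF α (β₀-1) x), abs_nonneg (FF α β₂ x)]
      · linarith [le_abs_self (FF α β₂ x), abs_nonneg (FF α (β₀-1) x)]
    · exact ((integrableOn_FF α (β₀-1) (by linarith)).abs.add
        (integrableOn_FF α β₂ hb2).abs)
    · filter_upwards [ae_restrict_mem measurableSet_Ioo] with x hx
      obtain ⟨hx0, hx1⟩ := hx
      have c1 : Continuous (fun β : ℝ => FF α β x) := by
        unfold FF Fa
        exact (((continuous_const.mul (cont_rpow_exp hx0)).add
          (continuous_const.mul (cont_rpow_exp (by linarith)))).sub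
            continuous_const).mul continuous_const
      exact c1.continuousAt
  exact key

lemma integral_rpow_Ioo {r : ℝ} (hr : -1 < r) {c : ℝ} (hc : 0 < c) :
    ∫ x in Ioo (0:ℝ) c, x ^ r = c ^ (r+1) / (r+1) := by
  have h : ∫ x in (0:ℝ)..c, x ^ r = (c^(r+1) - 0^(r+1))/(r+1) := integral_rpow (Or.inl hr)
  rw [intervalIntegral.integral_of_le hc.le, integral_Ioc_eq_integral_Ioo] at h
  rwa [Real.zero_rpow (by linarith), sub_zero] at h

lemma Ifun_split (α β : ℝ) (hβ : β < 2*α + 3/2) {t : ℝ} (ht0 : 0 < t) (ht1 : t ≤ 1/2) :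
    Ifun α β = (∫ x in Ioo (0:ℝ) t, FF α β x) + ((∫ x in Ico t (1/2), FF α β x)
      + (∫ x in Ico (1/2:ℝ) 1, FF α β x)) := by
  have hI := integrableOn_FF α β hβ
  have s1 : Ioo (0:ℝ) t ⊆ Ioo 0 1 := Ioo_subset_Ioo le_rfl (by linarith)
  have s2 : Ico t (1/2:ℝ) ⊆ Ioo 0 1 := fun x hx => ⟨lt_of_lt_of_le ht0 hx.1, by
    have := hx.2; linarith⟩
  have s3 : Ico (1/2:ℝ) 1 ⊆ Ioo 0 1 := fun x hx => ⟨by linarith [hx.1], hx.2⟩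
  have d1 : Disjoint (Ico t (1/2:ℝ)) (Ico (1/2:ℝ) 1) := Ico_disjoint_Ico_same
  have d2 : Disjoint (Ioo (0:ℝ) t) (Ico t (1/2) ∪ Ico (1/2:ℝ) 1) := by
    rw [disjoint_union_right]
    constructor
    · exact disjoint_left.mpr fun x hx hx' => absurd hx'.1 (not_le.2 hx.2)
    · exact disjoint_left.mpr fun x hx hx' => absurd hx'.1 (not_le.2 (by linarith [hx.2]))
  have hu : Ioo (0:ℝ) 1 = Ioo 0 t ∪ (Ico t (1/2) ∪ Ico (1/2:ℝ) 1) := by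
    rw [Ico_union_Ico_eq_Ico ht1 (by norm_num), Ioo_union_Ico_eq_Ioo ht0 (by linarith)]
  rw [Ifun_eq, hu, setIntegral_union d2 (measurableSet_Ico.union measurableSet_Ico)
    (hI.mono_set s1) ((hI.mono_set s2).union (hI.mono_set s3)),
    setIntegral_union d1 measurableSet_Ico (hI.mono_set s2) (hI.mono_set s3)]

lemma tendsto_top (α : ℝ) :
    Tendsto (Ifun α) (𝓝[<] (2*α + 3/2)) atTop := by
  rw [tendsto_atTop]
  intro M
  set β₁ := 2*α with hβ₁
  have hβ₁B : β₁ < 2*α + 3/2 := by rw [hβ₁]; linarith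
  obtain ⟨C, hC0, hC⟩ := lip α β₁
  set c2 := ∫ x in Ico (1/2:ℝ) 1, FF α β₁ x with hc2
  set c3 := ∫ x in Ioo (0:ℝ) (1/2), 4*C*x^(-(1/2):ℝ) with hc3
  have hint_half : IntegrableOn (fun x : ℝ => 4*C*x^(-(1/2):ℝ)) (Ioo (0:ℝ) (1/2)) :=
    (intOn_rpow (by norm_num) (by norm_num)).const_mul _
  have ev1 : ∀ᶠ β in 𝓝[<] (2*α + 3/2), β₁ ≤ β := by
    have : Ioi β₁ ∈ 𝓝[<] (2*α + 3/2) :=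
      nhdsWithin_le_nhds (Ioi_mem_nhds hβ₁B)
    filter_upwards [this] with β hβ
    exact le_of_lt hβ
  have ev2 : ∀ᶠ β in 𝓝[<] (2*α + 3/2), β < 2*α + 3/2 := eventually_mem_nhdsWithin
  have hten : Tendsto (fun β => Kmin α * ((1/2:ℝ)^(2*α+3/2-β)/(2*α+3/2-β)))
      (𝓝[<] (2*α + 3/2)) atTop := by
    rw [tendsto_const_mul_atTop_of_pos (Kmin_pos α)]
    have h1 : Tendsto (fun β : ℝ => 2*α+3/2-β) (𝓝[<] (2*α + 3/2)) (𝓝[>] (0:ℝ)) := by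
      rw [tendsto_nhdsWithin_iff]
      constructor
      · have h := ((continuous_const (y := 2*α+3/2)).sub continuous_id).tendsto (2*α+3/2)
        simp only [Pi.sub_apply, id_eq, sub_self] at h
        exact h.mono_left nhdsWithin_le_nhds
      · exact eventually_mem_nhdsWithin.mono fun β hβ => mem_Ioi.2 (sub_pos.2 hβ)
    have h2 : Tendsto (fun δ : ℝ => (1/2:ℝ)^δ / δ) (𝓝[>] (0:ℝ)) atTop := by
      have hf : Tendsto (fun δ : ℝ => (1/2:ℝ)^δ) (𝓝 (0:ℝ)) (𝓝 1) := by
        have hcont : Continuous (fun δ : ℝ => (1/2:ℝ)^δ) := by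
          have : (fun δ : ℝ => (1/2:ℝ)^δ) = fun δ => Real.exp (Real.log (1/2) * δ) :=
            funext fun δ => Real.rpow_def_of_pos (by norm_num) _
          rw [this]; fun_prop
        have := hcont.tendsto 0
        simpa using this
      have := Filter.Tendsto.pos_mul_atTop one_pos (hf.mono_left nhdsWithin_le_nhds)
        tendsto_inv_nhdsGT_zero
      simpa [div_eq_mul_inv] using this
    exact h2.comp h1
  have ev3 : ∀ᶠ β in 𝓝[<] (2*α + 3/2),
      M + c3 - c2 ≤ Kmin α * ((1/2:ℝ)^(2*α+3/2-β)/(2*α+3/2-β)) :=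
    hten.eventually_ge_atTop _
  filter_upwards [ev1, ev2, ev3] with β h1 h2 h3
  have hq : (-1:ℝ) < 2*α+2 - β - (3/2) := by linarith
  have hIβ := integrableOn_FF α β h2
  -- lower bound on the left piece
  have key1 : Kmin α * ((1/2:ℝ)^(2*α+3/2-β)/(2*α+3/2-β)) - c3
      ≤ ∫ x in Ioo (0:ℝ) (1/2), FF α β x := by
    have hlow : IntegrableOn
        (fun x : ℝ => Kmin α * x ^ (2*α+2 - β - (3/2)) - 4*C*x^(-(1/2):ℝ))
        (Ioo (0:ℝ) (1/2)) :=
      ((intOn_rpow hq (by norm_num)).const_mul _).sub hint_half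
    have hmono := setIntegral_mono_on hlow
      (hIβ.mono_set (Ioo_subset_Ioo le_rfl (by norm_num))) measurableSet_Ioo
      (fun x hx => FF_lower α β₁ β h1 hC0 hC hx.1 hx.2.le)
    have hval : ∫ x in Ioo (0:ℝ) (1/2),
        (Kmin α * x ^ (2*α+2 - β - (3/2)) - 4*C*x^(-(1/2):ℝ))
        = Kmin α * ((1/2:ℝ)^(2*α+3/2-β)/(2*α+3/2-β)) - c3 := by
      rw [integral_sub ((intOn_rpow hq (by norm_num)).const_mul _) hint_half,
        MeasureTheory.integral_const_mul, integral_rpow_Ioo hq (by norm_num)]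
      rw [show 2*α+2 - β - (3/2) + 1 = 2*α+3/2-β by ring]
    rw [hval] at hmono
    exact hmono
  have key2 : c2 ≤ ∫ x in Ico (1/2:ℝ) 1, FF α β x := by
    have s3 : Ico (1/2:ℝ) 1 ⊆ Ioo 0 1 := fun x hx => ⟨by linarith [hx.1], hx.2⟩
    exact setIntegral_mono_on ((integrableOn_FF α β₁ hβ₁B).mono_set s3)
      (hIβ.mono_set s3) measurableSet_Ico
      (fun x hx => FF_le α h1 (s3 hx))
  have hsplit := Ifun_split α β h2 (by norm_num : (0:ℝ) < 1/2) le_rfl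
  rw [Ico_self] at hsplit
  simp only [setIntegral_empty] at hsplit
  rw [hsplit]
  linarith

set_option maxHeartbeats 1000000 in
lemma tendsto_bot (α : ℝ) : Tendsto (Ifun α) atBot atBot := by
  rw [tendsto_atBot]
  intro M
  set β₀ := min (2*α+1) 0 with hβ₀
  have hβ₀B : β₀ < 2*α + 3/2 := lt_of_le_of_lt (min_le_left _ _) (by linarith)
  have hβ₀0 : β₀ ≤ 0 := min_le_right _ _
  set C₀ := ∫ x in Ioo (0:ℝ) 1, |FF α β₀ x| with hC₀def
  have hC₀0 : 0 ≤ C₀ := integral_nonneg fun x => abs_nonneg _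
  have outer : ∀ s : Set ℝ, s ⊆ Ioo (0:ℝ) 1 → MeasurableSet s → ∀ β ≤ β₀,
      ∫ x in s, FF α β x ≤ C₀ := by
    intro s hs hms β hβ
    have hint : IntegrableOn (FF α β) s :=
      (integrableOn_FF α β (lt_of_le_of_lt hβ hβ₀B)).mono_set hs
    have hint0 : IntegrableOn (FF α β₀) s := (integrableOn_FF α β₀ hβ₀B).mono_set hs
    calc ∫ x in s, FF α β x ≤ ∫ x in s, FF α β₀ x :=
        setIntegral_mono_on hint hint0 hms fun x hx => FF_le α hβ (hs hx)
      _ ≤ ∫ x in s, |FF α β₀ x| :=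
        setIntegral_mono_on hint0 hint0.abs hms fun x hx => le_abs_self _
      _ ≤ C₀ := setIntegral_mono_set (integrableOn_FF α β₀ hβ₀B).abs
          (Eventually.of_forall fun x => abs_nonneg _) (HasSubset.Subset.eventuallyLE hs)
  -- choose `t`
  have hpow : Tendsto (fun t : ℝ => t ^ (-(1/2):ℝ)) (𝓝[>] (0:ℝ)) atTop := by
    have h := (tendsto_rpow_atTop (y := ((1:ℝ)/2)) (by norm_num)).comp tendsto_inv_nhdsGT_zero
    apply h.congr'
    filter_upwards [self_mem_nhdsWithin] with u hu
    have hu0 : (0:ℝ) < u := hu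
    show (u⁻¹) ^ ((1:ℝ)/2) = u ^ (-(1/2):ℝ)
    rw [← Real.rpow_neg_one u, ← Real.rpow_mul hu0.le]
    norm_num
  have hWtend : Tendsto (fun t : ℝ => 2*t^(-(1/2):ℝ) - 4) (𝓝[>] (0:ℝ)) atTop := by
    have h2 := (tendsto_const_mul_atTop_of_pos two_pos).2 hpow
    have := tendsto_atTop_add_const_right _ (-4 : ℝ) h2
    apply this.congr fun u => by ring
  obtain ⟨t, htW, ht0, htlt⟩ :
      ∃ t : ℝ, (2*C₀ + 1 - M ≤ 2*t^(-(1/2):ℝ) - 4) ∧ 0 < t ∧ t < 1/2 := by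
    have e1 := hWtend.eventually_ge_atTop (2*C₀ + 1 - M)
    have e2 : ∀ᶠ u : ℝ in 𝓝[>] (0:ℝ), 0 < u := eventually_mem_nhdsWithin
    have e3 : ∀ᶠ u : ℝ in 𝓝[>] (0:ℝ), u < 1/2 := by
      have hmem : Iio (1/2:ℝ) ∈ 𝓝[>] (0:ℝ) :=
        nhdsWithin_le_nhds (IsOpen.mem_nhds isOpen_Iio (by norm_num))
      filter_upwards [hmem] with u hu
      exact hu
    obtain ⟨u, h1, h2, h3⟩ := (e1.and (e2.and e3)).exists
    exact ⟨u, h1, h2, h3⟩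
  -- compact bound on the middle
  have hcontK : ContinuousOn (fun x : ℝ => cfun x ^ (α+1) + cfun (1-x) ^ (α+1))
      (Icc t (1/2:ℝ)) := by
    have hc : Continuous cfun := by unfold cfun; fun_prop
    apply ContinuousOn.add
    · exact hc.continuousOn.rpow_const fun x hx =>
        Or.inl (cfun_pos (lt_of_lt_of_le ht0 hx.1) (by linarith [hx.2])).ne'
    · apply ContinuousOn.rpow_const ((hc.comp (continuous_const.sub continuous_id)).continuousOn)
      intro x hx
      have h0 : (0:ℝ) < 1 - x := by linarith [hx.2]
      exact Or.inl (by simpa using (cfun_pos h0 (by linarith [hx.1])).ne')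
  obtain ⟨Ka, hKa⟩ := (isCompact_Icc (a := t) (b := (1/2:ℝ))).exists_bound_of_continuousOn hcontK
  have hKa0 : 0 ≤ Ka := le_trans (norm_nonneg _) (hKa t ⟨le_refl t, htlt.le⟩)
  set Wt := (t*(1-t)) ^ (-(3/2):ℝ) with hWtdef
  have hWt0 : 0 < Wt := rpow_pos_of_pos (by nlinarith) _
  have hdecay : Tendsto (fun β : ℝ => (1-t) ^ (-β)) atBot (𝓝 0) := by
    have hb := tendsto_rpow_atTop_of_base_lt_one (1-t) (by linarith) (by linarith)
    exact hb.comp (tendsto_neg_atBot_atTop : Tendsto (Neg.neg : ℝ → ℝ) atBot atTop)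
  have evs : ∀ᶠ β : ℝ in atBot, Ka * (1-t)^(-β) * Wt * (1/2 - t) ≤ 1 := by
    have hD0 : 0 ≤ Ka * Wt * (1/2 - t) := mul_nonneg (mul_nonneg hKa0 hWt0.le) (by linarith)
    have hsmall := hdecay.eventually_le_const
      (show (0:ℝ) < (Ka*Wt*(1/2-t)+1)⁻¹ from by positivity)
    filter_upwards [hsmall] with β hβ
    have h0 : 0 ≤ (1-t)^(-β) := Real.rpow_nonneg (by linarith) _
    calc Ka * (1-t)^(-β) * Wt * (1/2-t) = (Ka*Wt*(1/2-t)) * (1-t)^(-β) := by ring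
      _ ≤ (Ka*Wt*(1/2-t)) * (Ka*Wt*(1/2-t)+1)⁻¹ := mul_le_mul_of_nonneg_left hβ hD0
      _ ≤ 1 := by
          rw [← div_eq_mul_inv, div_le_one (by linarith)]
          linarith
  filter_upwards [evs, eventually_le_atBot β₀] with β hsm hβ
  have hβB : β < 2*α+3/2 := lt_of_le_of_lt hβ hβ₀B
  have hβ0 : β ≤ 0 := le_trans hβ hβ₀0
  have hsplit := Ifun_split α β hβB ht0 htlt.le
  have o1 := outer (Ioo 0 t) (Ioo_subset_Ioo le_rfl (by linarith)) measurableSet_Ioo β hβ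
  have o3 := outer (Ico (1/2) 1) (fun x hx => ⟨by linarith [hx.1], hx.2⟩)
    measurableSet_Ico β hβ
  -- middle piece
  have hmid : ∫ x in Ico t (1/2:ℝ), FF α β x
      ≤ Ka * (1-t)^(-β) * Wt * (1/2 - t) - (2*t^(-(1/2):ℝ) - 4) := by
    have hmem0 : (0:ℝ) ∉ uIcc t (1/2:ℝ) := by
      rw [uIcc_of_le htlt.le]
      exact fun h => absurd h.1 (not_le.2 ht0)
    have hpow_int : IntegrableOn (fun x : ℝ => x ^ (-(3/2):ℝ)) (Ico t (1/2)) := by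
      have h := intervalIntegral.intervalIntegrable_rpow (μ := volume) (r := (-(3/2):ℝ))
        (a := t) (b := 1/2) (Or.inr hmem0)
      rw [intervalIntegrable_iff_integrableOn_Ioc_of_le htlt.le,
        integrableOn_Ioc_iff_integrableOn_Ioo] at h
      rwa [integrableOn_Ico_iff_integrableOn_Ioo]
    have hvolIco : volume (Ico t (1/2:ℝ)) < ⊤ := by
      rw [Real.volume_Ico]; exact ENNReal.ofReal_lt_top
    have hconst_int : IntegrableOn
        (fun x : ℝ => Ka*(1-t)^(-β)*Wt - x^(-(3/2):ℝ)) (Ico t (1/2)) :=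
      (integrableOn_const hvolIco.ne).sub hpow_int
    have hs2 : Ico t (1/2:ℝ) ⊆ Ioo 0 1 := fun x hx =>
      ⟨lt_of_lt_of_le ht0 hx.1, by linarith [hx.2]⟩
    have hFFint : IntegrableOn (FF α β) (Ico t (1/2)) :=
      (integrableOn_FF α β hβB).mono_set hs2
    have hpw : 0 ≤ (1-t)^(-β) := Real.rpow_nonneg (by linarith) _
    have hpt : ∀ x ∈ Ico t (1/2:ℝ), FF α β x ≤ Ka*(1-t)^(-β)*Wt - x^(-(3/2):ℝ) := by
      intro x hx
      have hx0 : 0 < x := lt_of_lt_of_le ht0 hx.1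
      have hx2 : x < 1/2 := hx.2
      have hx1 : x < 1 := by linarith
      have hc1 : 0 ≤ cfun x ^ (α+1) := (rpow_pos_of_pos (cfun_pos hx0 (by linarith)) _).le
      have hc2 : 0 ≤ cfun (1-x) ^ (α+1) :=
        (rpow_pos_of_pos (cfun_pos (by linarith) (by linarith)) _).le
      have hA : Fa α β x ≤ cfun x ^ (α+1) * (1-t)^(-β) := by
        unfold Fa
        exact mul_le_mul_of_nonneg_left
          (Real.rpow_le_rpow hx0.le (by linarith) (by linarith)) hc1
      have hB : Fa α β (1-x) ≤ cfun (1-x) ^ (α+1) * (1-t)^(-β) := by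
        unfold Fa
        exact mul_le_mul_of_nonneg_left
          (Real.rpow_le_rpow (by linarith) (by linarith [hx.1]) (by linarith)) hc2
      have hsum : Fa α β x + Fa α β (1-x) ≤ Ka * (1-t)^(-β) := by
        have hKx := hKa x ⟨hx.1, hx2.le⟩
        rw [Real.norm_eq_abs] at hKx
        have hKx' : cfun x^(α+1) + cfun (1-x)^(α+1) ≤ Ka := le_trans (le_abs_self _) hKx
        calc Fa α β x + Fa α β (1-x)
            ≤ (cfun x^(α+1) + cfun (1-x)^(α+1)) * (1-t)^(-β) := by
              have := add_le_add hA hB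
              calc Fa α β x + Fa α β (1-x)
                  ≤ cfun x ^ (α+1) * (1-t)^(-β) + cfun (1-x) ^ (α+1) * (1-t)^(-β) := this
                _ = (cfun x^(α+1) + cfun (1-x)^(α+1)) * (1-t)^(-β) := by ring
          _ ≤ Ka * (1-t)^(-β) := mul_le_mul_of_nonneg_right hKx' hpw
      have hw_le : (x*(1-x)) ^ (-(3/2):ℝ) ≤ Wt := by
        apply Real.rpow_le_rpow_of_nonpos (by nlinarith) ?_ (by norm_num)
        nlinarith [mul_nonneg (sub_nonneg.2 hx.1) (show (0:ℝ) ≤ 1-t-x by linarith)]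
      have hw_ge : x^(-(3/2):ℝ) ≤ (x*(1-x)) ^ (-(3/2):ℝ) := by
        rw [w_decomp hx0 hx1]
        have h1 := (w_facts hx0 hx2.le).1
        nlinarith [rpow_pos_of_pos hx0 (-(3/2):ℝ)]
      have hw0 : 0 ≤ (x*(1-x)) ^ (-(3/2):ℝ) := Real.rpow_nonneg (by nlinarith) _
      have e1 : FF α β x = (Fa α β x + Fa α β (1-x)) * ((x*(1-x))^(-(3/2):ℝ))
          - (x*(1-x))^(-(3/2):ℝ) := by rw [FF]; ring
      have hsum0 : 0 ≤ Fa α β x + Fa α β (1-x) :=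
        add_nonneg (Fa_pos α β hx0 (by linarith)).le
          (Fa_pos α β (x := 1-x) (by linarith) (by linarith)).le
      have e2 : (Fa α β x + Fa α β (1-x)) * ((x*(1-x))^(-(3/2):ℝ))
          ≤ (Ka * (1-t)^(-β)) * Wt :=
        mul_le_mul hsum hw_le hw0 (mul_nonneg hKa0 hpw)
      rw [e1]
      have : Ka * (1-t)^(-β) * Wt = (Ka * (1-t)^(-β)) * Wt := by ring
      rw [this]
      linarith
    have hmono := setIntegral_mono_on hFFint hconst_int measurableSet_Ico hpt
    have hval : ∫ x in Ico t (1/2:ℝ), (Ka*(1-t)^(-β)*Wt - x^(-(3/2):ℝ))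
        = Ka*(1-t)^(-β)*Wt * (1/2 - t) - ∫ x in Ico t (1/2:ℝ), x^(-(3/2):ℝ) := by
      rw [integral_sub (integrableOn_const (C := Ka*(1-t)^(-β)*Wt) hvolIco.ne) hpow_int,
        setIntegral_const, Real.volume_real_Ico_of_le htlt.le,
        smul_eq_mul]
      ring
    have hpowval : ∫ x in Ico t (1/2:ℝ), x^(-(3/2):ℝ)
        = 2*t^(-(1/2):ℝ) - 2*(1/2:ℝ)^(-(1/2):ℝ) := by
      rw [integral_Ico_eq_integral_Ioo, ← integral_Ioc_eq_integral_Ioo,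
        ← intervalIntegral.integral_of_le htlt.le,
        integral_rpow (Or.inr ⟨by norm_num, hmem0⟩)]
      rw [show (-(3/2):ℝ)+1 = -(1/2) by norm_num]
      ring
    have hhalf : 2*(1/2:ℝ)^(-(1/2):ℝ) ≤ 4 := by
      have b : ((1/2:ℝ)) ^ (-(1/2):ℝ) ≤ (1/2:ℝ) ^ ((-1:ℤ):ℝ) :=
        Real.rpow_le_rpow_of_exponent_ge (by norm_num) (by norm_num) (by push_cast; norm_num)
      rw [Real.rpow_intCast] at b
      norm_num at b
      linarith
    rw [hval, hpowval] at hmono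
    linarith
  rw [hsplit]
  linarith

end IfunAux

theorem Ifun_strictMono_and_limits (α : ℝ) :
    StrictMonoOn (Ifun α) (Set.Iio (2 * α + 3 / 2)) ∧
    Filter.Tendsto (Ifun α) Filter.atBot Filter.atBot ∧
    Filter.Tendsto (Ifun α) (nhdsWithin (2 * α + 3 / 2) (Set.Iio (2 * α + 3 / 2)))
      Filter.atTop ∧
    ∃! β, β ∈ Set.Iio (2 * α + 3 / 2) ∧ Ifun α β = 0 := by
  open Set Filter IfunAux in
  refine ⟨?_, IfunAux.tendsto_bot α, IfunAux.tendsto_top α, ?_⟩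
  · intro a _ b hb hab
    exact IfunAux.Ifun_lt α hab hb
  · obtain ⟨a, haB, haneg⟩ : ∃ a, a < 2*α+3/2 ∧ Ifun α a ≤ -1 := by
      have e1 := (tendsto_atBot.1 (IfunAux.tendsto_bot α)) (-1)
      have e2 := eventually_lt_atBot (2*α+3/2)
      obtain ⟨a, h1, h2⟩ := (e2.and e1).exists
      exact ⟨a, h1, h2⟩
    obtain ⟨b, hbB, hab, hbpos⟩ : ∃ b, b < 2*α+3/2 ∧ a < b ∧ 1 ≤ Ifun α b := by
      have e1 := (tendsto_atTop.1 (IfunAux.tendsto_top α)) 1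
      have e2 : ∀ᶠ β in nhdsWithin (2*α+3/2) (Iio (2*α+3/2)), a < β := by
        have hmem : Ioi a ∈ nhdsWithin (2*α+3/2) (Iio (2*α+3/2)) :=
          nhdsWithin_le_nhds (Ioi_mem_nhds haB)
        filter_upwards [hmem] with β hβ
        exact hβ
      have e3 : ∀ᶠ β in nhdsWithin (2*α+3/2) (Iio (2*α+3/2)), β < 2*α+3/2 :=
        eventually_mem_nhdsWithin
      obtain ⟨b, h1, h2, h3⟩ := (e3.and (e2.and e1)).exists
      exact ⟨b, h1, h2, h3⟩
    have hcont : ContinuousOn (Ifun α) (Icc a b) := fun β hβ =>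
      (IfunAux.Ifun_contAt α (lt_of_le_of_lt hβ.2 hbB)).continuousWithinAt
    have h0 : (0:ℝ) ∈ Icc (Ifun α a) (Ifun α b) := ⟨by linarith, by linarith⟩
    obtain ⟨β, hβmem, hβ0⟩ := intermediate_value_Icc hab.le hcont h0
    refine ⟨β, ⟨lt_of_le_of_lt hβmem.2 hbB, hβ0⟩, ?_⟩
    rintro β' ⟨hβ'B, h0'⟩
    by_contra hne
    rcases lt_or_gt_of_ne hne with hlt | hgt
    · have := IfunAux.Ifun_lt α hlt (lt_of_le_of_lt hβmem.2 hbB)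
      rw [h0', hβ0] at this
      exact lt_irrefl 0 this
    · have := IfunAux.Ifun_lt α hgt hβ'B
      rw [h0', hβ0] at this
      exact lt_irrefl 0 this
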